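/- arXiv:2410.09357 — 2 statements merged into one kernel-verified Lean document; each statement's English description precedes it below -/
import Mathlib

section
/- Let s ≥ 1 and let P ∈ ℤ[X₁,…,X_s] be a polynomial of total degree d ≥ 2. Then the upper density of squarefree values of P is at most the Euler product: for every real ε > 0 there exists M such that for all tuples 𝐏 = (P₁,…,P_s) of positive integers with min(P₁,…,P_s) ≥ M one has N_P(𝐏) ≤ (𝔖_P + ε) · 2ˢ · P₁⋯P_s. -/
/-- `ρ_P(q)`: the number of tuples `a ∈ (ℤ/qℤ)ˢ` with `P(a) ≡ 0 (mod q)`. -/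
noncomputable def rhoP (s : ℕ) (P : MvPolynomial (Fin s) ℤ) (q : ℕ) : ℕ :=
  Nat.card {a : Fin s → ZMod q //
    MvPolynomial.eval a (MvPolynomial.map (Int.castRingHom (ZMod q)) P) = 0}

/-- The partial Euler product `∏_{p ≤ N, p prime} (1 − ρ_P(p²)/p^{2s})`. -/
noncomputable def eulerPartialProd (s : ℕ) (P : MvPolynomial (Fin s) ℤ) (N : ℕ) : ℝ :=
  ∏ p ∈ (Finset.range (N + 1)).filter Nat.Prime,
    (1 - (rhoP s P (p ^ 2) : ℝ) / (p : ℝ) ^ (2 * s))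

/-- `N_P(𝐏)`: the number of tuples `a ∈ ℤˢ` with `|a j| ≤ P j` for all `j` such that
`P(a)` is a squarefree integer. -/
noncomputable def NP (s : ℕ) (P : MvPolynomial (Fin s) ℤ) (Pb : Fin s → ℕ) : ℕ :=
  Nat.card {a : Fin s → ℤ //
    (∀ j, |a j| ≤ (Pb j : ℤ)) ∧ Squarefree (MvPolynomial.eval a P)}

open MvPolynomial Finset

private lemma eval_cast_comm {s : ℕ} (P : MvPolynomial (Fin s) ℤ) {R : Type*} [CommRing R]
    (f : ℤ →+* R) (a : Fin s → ℤ) :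
    eval (fun j => f (a j)) (MvPolynomial.map f P) = f (eval a P) := by
  rw [eval_map]
  have := eval₂_comp_left f (RingHom.id ℤ) a P
  simpa [eval₂_id, Function.comp_def] using this.symm

private lemma card_nonroot {s : ℕ} (P : MvPolynomial (Fin s) ℤ) {p : ℕ} (hp : p.Prime) :
    Nat.card {z : Fin s → ZMod (p ^ 2) //
      eval z (MvPolynomial.map (Int.castRingHom (ZMod (p ^ 2))) P) ≠ 0}
    = p ^ (2 * s) - rhoP s P (p ^ 2) := by
  haveI : NeZero (p ^ 2) := ⟨pow_ne_zero 2 hp.ne_zero⟩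
  classical
  rw [rhoP, Nat.card_eq_fintype_card, Nat.card_eq_fintype_card,
    Fintype.card_subtype_compl, Fintype.card_fun, ZMod.card, Fintype.card_fin, ← pow_mul]


private lemma rho_le {s : ℕ} (P : MvPolynomial (Fin s) ℤ) {p : ℕ} (hp : p.Prime) :
    rhoP s P (p ^ 2) ≤ p ^ (2 * s) := by
  haveI : NeZero (p ^ 2) := ⟨pow_ne_zero 2 hp.ne_zero⟩
  classical
  rw [rhoP, Nat.card_eq_fintype_card]
  calc Fintype.card {a : Fin s → ZMod (p ^ 2) //
        eval a (MvPolynomial.map (Int.castRingHom (ZMod (p ^ 2))) P) = 0}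
      ≤ Fintype.card (Fin s → ZMod (p ^ 2)) := Fintype.card_subtype_le _
    _ = p ^ (2 * s) := by
        rw [Fintype.card_fun, ZMod.card, Fintype.card_fin, ← pow_mul]

private lemma NP_le {s : ℕ} (P : MvPolynomial (Fin s) ℤ) (primes : Finset ℕ)
    (hpr : ∀ p ∈ primes, Nat.Prime p) (Pb : Fin s → ℕ) :
    NP s P Pb ≤ (∏ p ∈ primes.attach, ((p : ℕ) ^ (2 * s) - rhoP s P ((p : ℕ) ^ 2))) *
      ∏ j, (2 * Pb j / (∏ p ∈ primes, p ^ 2) + 1) := by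
  classical
  set Q : ℕ := ∏ p ∈ primes, p ^ 2 with hQdef
  haveI hfin : ∀ p : {x // x ∈ primes}, Finite (ZMod ((p : ℕ) ^ 2)) := fun p => by
    haveI : NeZero ((p : ℕ) ^ 2) := ⟨pow_ne_zero 2 (hpr p p.2).ne_zero⟩
    infer_instance
  let T : Type := (∀ p : {x // x ∈ primes}, {z : Fin s → ZMod ((p : ℕ) ^ 2) //
      eval z (MvPolynomial.map (Int.castRingHom (ZMod ((p : ℕ) ^ 2))) P) ≠ 0}) ×
    (∀ j : Fin s, Fin (2 * Pb j / Q + 1))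
  have key : NP s P Pb ≤ Nat.card T := by
    rw [NP]
    refine Nat.card_le_card_of_injective (fun a =>
      (fun p => ⟨fun j => ((a.1 j : ℤ) : ZMod ((p : ℕ) ^ 2)), by
        have h1 : eval (fun j => ((Int.castRingHom (ZMod ((p : ℕ) ^ 2))) (a.1 j)))
            (MvPolynomial.map (Int.castRingHom (ZMod ((p : ℕ) ^ 2))) P)
            = (Int.castRingHom (ZMod ((p : ℕ) ^ 2))) (eval a.1 P) :=
          eval_cast_comm P _ a.1
        simp only [Int.coe_castRingHom] at h1
        rw [h1]
        intro h0
        have hdvd : (((p : ℕ) ^ 2 : ℕ) : ℤ) ∣ eval a.1 P :=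
          (ZMod.intCast_zmod_eq_zero_iff_dvd _ _).mp h0
        have hu : IsUnit ((p : ℕ) : ℤ) := a.2.2 _ (by
          refine dvd_trans (dvd_of_eq ?_) hdvd
          push_cast; ring)
        have hp2 := (hpr p p.2).two_le
        rcases Int.isUnit_iff.mp hu with h | h <;> omega⟩,
       fun j => ⟨((a.1 j + Pb j).toNat) / Q, by
        have ha := abs_le.mp (a.2.1 j)
        have hm : (a.1 j + Pb j).toNat ≤ 2 * Pb j := Int.toNat_le.mpr (by push_cast; omega)
        exact Nat.lt_succ_of_le (Nat.div_le_div_right hm)⟩)) ?_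
    intro a b hab
    have h1 := congrArg Prod.fst hab
    have h2 := congrArg Prod.snd hab
    simp only at h1 h2
    apply Subtype.ext
    funext j
    have hdvd : ∀ p ∈ primes, ((p : ℤ) ^ 2) ∣ (a.1 j - b.1 j) := by
      intro p hp
      have hres : ((a.1 j : ℤ) : ZMod (p ^ 2)) = ((b.1 j : ℤ) : ZMod (p ^ 2)) :=
        congrFun (congrArg Subtype.val (congrFun h1 ⟨p, hp⟩)) j
      have h0 : ((a.1 j - b.1 j : ℤ) : ZMod (p ^ 2)) = 0 := by
        push_cast
        rw [hres]; ring
      have := (ZMod.intCast_zmod_eq_zero_iff_dvd _ _).mp h0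
      exact_mod_cast this
    have hQdvd : ((Q : ℕ) : ℤ) ∣ (a.1 j - b.1 j) := by
      rw [hQdef]
      push_cast
      refine Finset.prod_dvd_of_coprime ?_ hdvd
      intro p hp q hq hne
      exact (((Nat.coprime_primes (hpr p hp) (hpr q hq)).mpr hne).isCoprime).pow
    have hoff : ((a.1 j + Pb j).toNat) / Q = ((b.1 j + Pb j).toNat) / Q :=
      congrArg Fin.val (congrFun h2 j)
    have haj := abs_le.mp (a.2.1 j)
    have hbj := abs_le.mp (b.2.1 j)
    have hma : (((a.1 j + Pb j).toNat : ℕ) : ℤ) = a.1 j + Pb j :=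
      Int.toNat_of_nonneg (by omega)
    have hmb : (((b.1 j + Pb j).toNat : ℕ) : ℤ) = b.1 j + Pb j :=
      Int.toNat_of_nonneg (by omega)
    have hmod : ((a.1 j + Pb j).toNat) % Q = ((b.1 j + Pb j).toNat) % Q := by
      have : (a.1 j + Pb j).toNat ≡ (b.1 j + Pb j).toNat [MOD Q] := by
        rw [Nat.modEq_iff_dvd, hma, hmb]
        have : (a.1 j + ↑(Pb j)) - (b.1 j + ↑(Pb j)) = a.1 j - b.1 j := by ring
        exact dvd_sub_comm.mp (by rw [this]; exact hQdvd)
      exact this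
    have hda := Nat.div_add_mod ((a.1 j + Pb j).toNat) Q
    have hdb := Nat.div_add_mod ((b.1 j + Pb j).toNat) Q
    have heq : (a.1 j + Pb j).toNat = (b.1 j + Pb j).toNat := by
      rw [← hda, ← hdb, hoff, hmod]
    omega
  refine key.trans (le_of_eq ?_)
  rw [Nat.card_prod, Nat.card_pi, Nat.card_pi]
  congr 1
  · rw [Finset.univ_eq_attach]
    exact Finset.prod_congr rfl fun p _ => card_nonroot P (hpr p p.2)
  · simp

/-- If `P ∈ ℤ[X₁,…,X_s]` has total degree `≥ 2`, then the upper density of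
squarefree values of `P` is at most the Euler product `𝔖_P` (the limit `S` of the
partial products): for every `ε > 0` there is `M` such that for all tuples `𝐏` of
positive integers with `min(P₁,…,P_s) ≥ M` one has `N_P(𝐏) ≤ (S + ε) · 2ˢ · P₁⋯P_s`. -/
theorem upper_density_le_euler_product (s : ℕ) (hs : 1 ≤ s)
    (P : MvPolynomial (Fin s) ℤ) (hd : 2 ≤ P.totalDegree)
    (S : ℝ) (hS : Filter.Tendsto (eulerPartialProd s P) Filter.atTop (nhds S)) :
    ∀ ε : ℝ, 0 < ε → ∃ M : ℕ, ∀ Pb : Fin s → ℕ, (∀ j, 0 < Pb j) →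
      (∀ j, M ≤ Pb j) →
      (NP s P Pb : ℝ) ≤ (S + ε) * 2 ^ s * ∏ j, (Pb j : ℝ) := by
  intro ε hε
  classical
  obtain ⟨N, hN⟩ := (hS.eventually (Iio_mem_nhds (show S < S + ε / 2 by linarith))).exists
  set primes := (Finset.range (N + 1)).filter Nat.Prime with hprimes
  have hpr : ∀ p ∈ primes, Nat.Prime p := fun p hp => (Finset.mem_filter.mp hp).2
  set Q : ℕ := ∏ p ∈ primes, p ^ 2 with hQdef
  have hQ : 0 < Q := Finset.prod_pos fun p hp => pow_pos (hpr p hp).pos 2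
  have hQR : (0:ℝ) < (Q:ℝ) := by exact_mod_cast hQ
  have hEeq : eulerPartialProd s P N
      = ∏ p ∈ primes, (1 - (rhoP s P (p ^ 2) : ℝ) / (p : ℝ) ^ (2 * s)) := rfl
  set E : ℝ := eulerPartialProd s P N with hEdef
  have hfac : ∀ p ∈ primes, (0:ℝ) < (p : ℝ) ^ (2 * s) := fun p hp =>
    pow_pos (by exact_mod_cast (hpr p hp).pos) _
  have hE0 : 0 ≤ E := by
    rw [hEeq]
    refine Finset.prod_nonneg fun p hp => ?_
    have h1 : (rhoP s P (p ^ 2) : ℝ) ≤ (p : ℝ) ^ (2 * s) := by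
      exact_mod_cast rho_le P (hpr p hp)
    have h2 := hfac p hp
    have := div_le_one_of_le₀ h1 h2.le
    linarith
  have hE : E ≤ S + ε / 2 := le_of_lt hN
  have hS2 : 0 ≤ S + ε / 2 := hE0.trans hE
  -- choose M
  have h0 : Filter.Tendsto (fun M : ℕ => (Q:ℝ) / (2 * M)) Filter.atTop (nhds 0) := by
    have h := tendsto_const_div_atTop_nhds_zero_nat ((Q:ℝ) / 2)
    refine h.congr fun M => ?_
    rw [div_div]
  have htend : Filter.Tendsto (fun M : ℕ => (1 + (Q:ℝ) / (2 * M)) ^ s * (S + ε / 2))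
      Filter.atTop (nhds (S + ε / 2)) := by
    have h1 : Filter.Tendsto (fun M : ℕ => (1 + (Q:ℝ) / (2 * M)) ^ s)
        Filter.atTop (nhds 1) := by
      have hadd := Filter.Tendsto.const_add (1:ℝ) h0
      rw [add_zero] at hadd
      have := hadd.pow s
      rwa [one_pow] at this
    have := h1.mul_const (S + ε / 2)
    rwa [one_mul] at this
  obtain ⟨M, hMb, hM1⟩ := ((htend.eventually (Iio_mem_nhds
    (show S + ε / 2 < S + ε by linarith))).and (Filter.eventually_ge_atTop 1)).exists
  have hM0 : (0:ℝ) < (M:ℝ) := by exact_mod_cast hM1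
  have hc0 : (0:ℝ) ≤ 1 + (Q:ℝ) / (2 * M) := by positivity
  refine ⟨M, fun Pb hPb hPbM => ?_⟩
  have hNP := NP_le P primes hpr Pb
  -- cast the prime product
  have hcast1 : ((∏ p ∈ primes.attach, ((p:ℕ) ^ (2 * s) - rhoP s P ((p:ℕ) ^ 2)) : ℕ) : ℝ)
      = (Q:ℝ) ^ s * E := by
    rw [Nat.cast_prod]
    have e1 : ∀ p ∈ primes.attach,
        ((((p:ℕ) ^ (2 * s) - rhoP s P ((p:ℕ) ^ 2) : ℕ)) : ℝ)
        = ((p:ℕ) : ℝ) ^ (2 * s) - (rhoP s P ((p:ℕ) ^ 2) : ℝ) := fun p _ => by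
      rw [Nat.cast_sub (rho_le P (hpr p p.2))]; push_cast; ring
    rw [Finset.prod_congr rfl e1, Finset.prod_attach primes
      (fun p => ((p : ℝ) ^ (2 * s) - (rhoP s P (p ^ 2) : ℝ)))]
    have e2 : ∀ p ∈ primes, ((p:ℝ) ^ (2 * s) - (rhoP s P (p ^ 2) : ℝ))
        = (p:ℝ) ^ (2 * s) * (1 - (rhoP s P (p ^ 2) : ℝ) / (p : ℝ) ^ (2 * s)) := fun p hp => by
      have h2 : ((p:ℝ)) ^ (2 * s) ≠ 0 := ne_of_gt (hfac p hp)
      field_simp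
    rw [Finset.prod_congr rfl e2, Finset.prod_mul_distrib, ← hEeq]
    congr 1
    rw [hQdef]
    push_cast
    rw [← Finset.prod_pow]
    exact Finset.prod_congr rfl fun p _ => by rw [← pow_mul]
  -- step 1
  have hbox : ∀ j, ((2 * Pb j / Q + 1 : ℕ) : ℝ) ≤ (2 * (Pb j : ℝ) + Q) / Q := by
    intro j
    rw [← Nat.add_div_right _ hQ]
    calc (((2 * Pb j + Q) / Q : ℕ) : ℝ) ≤ ((2 * Pb j + Q : ℕ) : ℝ) / (Q:ℝ) :=
      Nat.cast_div_le
    _ = (2 * (Pb j : ℝ) + Q) / Q := by push_cast; ring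
  have step1 : (NP s P Pb : ℝ) ≤ (Q:ℝ) ^ s * E * ∏ j, ((2 * (Pb j : ℝ) + Q) / Q) := by
    calc (NP s P Pb : ℝ)
        ≤ (((∏ p ∈ primes.attach, ((p:ℕ) ^ (2 * s) - rhoP s P ((p:ℕ) ^ 2))) *
            ∏ j, (2 * Pb j / Q + 1) : ℕ) : ℝ) := by exact_mod_cast hNP
      _ = (Q:ℝ) ^ s * E * ∏ j, ((2 * Pb j / Q + 1 : ℕ) : ℝ) := by
          rw [Nat.cast_mul, hcast1]
          congr 1
          exact Nat.cast_prod _ _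
      _ ≤ (Q:ℝ) ^ s * E * ∏ j, ((2 * (Pb j : ℝ) + Q) / Q) := by
          refine mul_le_mul_of_nonneg_left ?_ (by positivity)
          exact Finset.prod_le_prod (fun j _ => by positivity) fun j _ => hbox j
  have step1' : (NP s P Pb : ℝ) ≤ E * ∏ j, (2 * (Pb j : ℝ) + Q) := by
    refine step1.trans (le_of_eq ?_)
    rw [Finset.prod_div_distrib, Finset.prod_const, Finset.card_univ, Fintype.card_fin]
    field_simp
  -- step 2
  have step2 : ∏ j, (2 * (Pb j : ℝ) + Q)
      ≤ (1 + (Q:ℝ) / (2 * M)) ^ s * (2 ^ s * ∏ j, (Pb j : ℝ)) := by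
    have hfac2 : ∀ j, (2 * (Pb j : ℝ) + Q) ≤ 2 * (Pb j : ℝ) * (1 + (Q:ℝ) / (2 * M)) := by
      intro j
      have hMj : (M:ℝ) ≤ (Pb j : ℝ) := by exact_mod_cast hPbM j
      have key : (Q:ℝ) ≤ 2 * (Pb j : ℝ) * ((Q:ℝ) / (2 * M)) := by
        rw [mul_div_assoc']
        rw [le_div_iff₀ (by positivity)]
        nlinarith
      nlinarith
    calc ∏ j, (2 * (Pb j : ℝ) + Q)
        ≤ ∏ j, (2 * (Pb j : ℝ) * (1 + (Q:ℝ) / (2 * M))) :=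
          Finset.prod_le_prod (fun j _ => by positivity) fun j _ => hfac2 j
      _ = (1 + (Q:ℝ) / (2 * M)) ^ s * (2 ^ s * ∏ j, (Pb j : ℝ)) := by
          rw [Finset.prod_mul_distrib, Finset.prod_mul_distrib, Finset.prod_const,
            Finset.prod_const, Finset.card_univ, Fintype.card_fin]
          ring
  have hPbpos : (0:ℝ) ≤ ∏ j, (Pb j : ℝ) := Finset.prod_nonneg fun j _ => by positivity
  calc (NP s P Pb : ℝ) ≤ E * ∏ j, (2 * (Pb j : ℝ) + Q) := step1'
    _ ≤ (S + ε / 2) * ((1 + (Q:ℝ) / (2 * M)) ^ s * (2 ^ s * ∏ j, (Pb j : ℝ))) := by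
        have h1 : E * ∏ j, (2 * (Pb j : ℝ) + Q)
            ≤ (S + ε / 2) * ∏ j, (2 * (Pb j : ℝ) + Q) := by
          refine mul_le_mul_of_nonneg_right hE ?_
          exact Finset.prod_nonneg fun j _ => by positivity
        refine h1.trans ?_
        exact mul_le_mul_of_nonneg_left step2 hS2
    _ = ((1 + (Q:ℝ) / (2 * M)) ^ s * (S + ε / 2)) * (2 ^ s * ∏ j, (Pb j : ℝ)) := by ring
    _ ≤ (S + ε) * (2 ^ s * ∏ j, (Pb j : ℝ)) := by
        refine mul_le_mul_of_nonneg_right (le_of_lt hMb) (by positivity)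
    _ = (S + ε) * 2 ^ s * ∏ j, (Pb j : ℝ) := by ring
end

section
/- Let s ≥ 1 and let P ∈ ℤ[X₁,…,X_s] be a polynomial of total degree d ≥ 2. Suppose the upper density of squarefree values of P is positive: there exists a real δ > 0 such that for every M there is a tuple 𝐏 = (P₁,…,P_s) of positive integers with min(P₁,…,P_s) ≥ M and N_P(𝐏) ≥ δ · 2ˢ · P₁⋯P_s. Then: (1) the Euler product 𝔖_P is strictly positive; (2) P is squarefree as a polynomial, i.e., there is no non-constant L ∈ ℤ[X₁,…,X_s] with L² dividing P in ℤ[X₁,…,X_s]; and (3) P does not enjoy property (a), i.e., for every prime p there exists (a₁,…,a_s) ∈ ℤˢ with p² not dividing P(a₁,…,a_s). -/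
open MvPolynomial Finset

/-! ### Auxiliary lemmas -/

/-- Schwartz–Zippel over ℤ: a nonzero multivariate polynomial has few zeros on a grid. -/
lemma sz_aux : ∀ (s : ℕ) (f : MvPolynomial (Fin s) ℤ), f ≠ 0 → ∀ (T : Fin s → Finset ℤ) (n : ℕ),
    (∀ j, n ≤ (T j).card) →
    ((Fintype.piFinset T).filter (fun a => MvPolynomial.eval a f = 0)).card * n ≤
      f.totalDegree * ∏ j, (T j).card := by
  intro s
  induction s with
  | zero =>
    intro f hf T n hT
    obtain ⟨c, rfl⟩ := MvPolynomial.C_surjective (Fin 0) f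
    have hc : c ≠ 0 := fun h => hf (by simp [h])
    have hemp : (Fintype.piFinset T).filter (fun a => MvPolynomial.eval a (C c) = 0) = ∅ := by
      apply Finset.filter_false_of_mem
      intro a _
      simpa using hc
    rw [hemp]
    simp
  | succ s ih =>
    intro f hf T n hT
    set F := MvPolynomial.finSuccEquiv ℤ s f with hFdef
    have hF0 : F ≠ 0 := by
      intro h
      apply hf
      have := congrArg (MvPolynomial.finSuccEquiv ℤ s).symm h
      simpa [hFdef] using this
    set k := F.natDegree with hk
    set g := F.coeff k with hg
    have hg0 : g ≠ 0 := by
      show F.coeff F.natDegree ≠ 0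
      exact Polynomial.leadingCoeff_ne_zero.mpr hF0
    have hdg : g.totalDegree + k ≤ f.totalDegree :=
      MvPolynomial.totalDegree_coeff_finSuccEquiv_add_le f k hg0
    set B := Fintype.piFinset (fun j : Fin s => T j.succ) with hB
    have hBcard : B.card = ∏ j : Fin s, (T j.succ).card := by
      rw [hB]; exact Fintype.card_piFinset _
    set Zg := (B.filter (fun b => MvPolynomial.eval b g = 0)).card with hZg
    have ihg : Zg * n ≤ g.totalDegree * ∏ j : Fin s, (T j.succ).card :=
      ih g hg0 _ n (fun j => hT j.succ)
    set A := ((T 0) ×ˢ B).filter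
      (fun p : ℤ × (Fin s → ℤ) => MvPolynomial.eval (Fin.cons p.1 p.2) f = 0) with hA
    have stepA : ((Fintype.piFinset T).filter (fun a => MvPolynomial.eval a f = 0)).card ≤
        A.card := by
      apply Finset.card_le_card_of_injOn (fun a => (a 0, Fin.tail a))
      · intro a ha
        rw [Finset.mem_coe, Finset.mem_filter, Fintype.mem_piFinset] at ha
        rw [Finset.mem_coe, hA, Finset.mem_filter, Finset.mem_product]
        refine ⟨⟨ha.1 0, ?_⟩, ?_⟩
        · rw [hB, Fintype.mem_piFinset]; intro j; exact ha.1 j.succ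
        · rw [Fin.cons_self_tail]; exact ha.2
      · intro a _ b _ hab
        have h1 : a 0 = b 0 := congrArg Prod.fst hab
        have h2 : Fin.tail a = Fin.tail b := congrArg Prod.snd hab
        funext j
        refine Fin.cases ?_ ?_ j
        · exact h1
        · intro i; exact congrFun h2 i
    set A₁ := A.filter (fun p : ℤ × (Fin s → ℤ) => MvPolynomial.eval p.2 g = 0) with hA₁
    set A₂ := A.filter (fun p : ℤ × (Fin s → ℤ) => ¬ MvPolynomial.eval p.2 g = 0) with hA₂
    have hsplit : A₁.card + A₂.card = A.card :=
      Finset.card_filter_add_card_filter_not _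
    have hA₁le : A₁.card ≤ (T 0).card * Zg := by
      have hsub : A₁ ⊆ (T 0) ×ˢ (B.filter (fun b => MvPolynomial.eval b g = 0)) := by
        intro p hp
        rw [hA₁, Finset.mem_filter] at hp
        obtain ⟨hpA, hpg⟩ := hp
        rw [hA, Finset.mem_filter, Finset.mem_product] at hpA
        rw [Finset.mem_product]
        exact ⟨hpA.1.1, Finset.mem_filter.mpr ⟨hpA.1.2, hpg⟩⟩
      calc A₁.card ≤ ((T 0) ×ˢ (B.filter (fun b => MvPolynomial.eval b g = 0))).card :=
            Finset.card_le_card hsub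
        _ = (T 0).card * Zg := Finset.card_product _ _
    have hA₂le : A₂.card ≤ k * B.card := by
      have himg : A₂.image Prod.snd ⊆ B := by
        intro b hb
        obtain ⟨p, hp, rfl⟩ := Finset.mem_image.mp hb
        rw [hA₂, Finset.mem_filter] at hp
        have hpA := hp.1
        rw [hA, Finset.mem_filter, Finset.mem_product] at hpA
        exact hpA.1.2
      have hfib : ∀ b ∈ A₂.image Prod.snd,
          (A₂.filter (fun p => Prod.snd p = b)).card ≤ k := by
        intro b hb
        obtain ⟨p₀, hp₀, rfl⟩ := Finset.mem_image.mp hb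
        have hgb : MvPolynomial.eval p₀.2 g ≠ 0 := by
          rw [hA₂, Finset.mem_filter] at hp₀; exact hp₀.2
        set q := Polynomial.map (MvPolynomial.eval p₀.2) F with hq
        have hq0 : q ≠ 0 := by
          intro h
          apply hgb
          have := congrArg (fun r => Polynomial.coeff r k) h
          simpa [hq, Polynomial.coeff_map, ← hg] using this
        have hqdeg : q.natDegree ≤ k := by
          rw [hk]; exact Polynomial.natDegree_map_le
        calc (A₂.filter (fun p => Prod.snd p = p₀.2)).card
            ≤ q.roots.toFinset.card := by
              apply Finset.card_le_card_of_injOn (fun p => p.1)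
              · intro p hp
                rw [Finset.mem_coe, Finset.mem_filter] at hp
                obtain ⟨hpA₂, hpb⟩ := hp
                rw [hA₂, Finset.mem_filter] at hpA₂
                have hpA := hpA₂.1
                rw [hA, Finset.mem_filter] at hpA
                have hev : MvPolynomial.eval (Fin.cons p.1 p.2) f = 0 := hpA.2
                rw [Finset.mem_coe, Multiset.mem_toFinset, Polynomial.mem_roots hq0]
                rw [MvPolynomial.eval_eq_eval_mv_eval'] at hev
                rw [hpb] at hev
                exact hev
              · intro p hp p' hp' hpp
                rw [Finset.mem_coe, Finset.mem_filter] at hp hp'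
                exact Prod.ext hpp (hp.2.trans hp'.2.symm)
          _ ≤ q.roots.card := q.roots.toFinset_card_le
          _ ≤ q.natDegree := Polynomial.card_roots' q
          _ ≤ k := hqdeg
      calc A₂.card ≤ k * (A₂.image Prod.snd).card :=
            Finset.card_le_mul_card_image _ k hfib
        _ ≤ k * B.card := Nat.mul_le_mul_left _ (Finset.card_le_card himg)
    have hn0 : n ≤ (T 0).card := hT 0
    calc ((Fintype.piFinset T).filter (fun a => MvPolynomial.eval a f = 0)).card * n
        ≤ A.card * n := Nat.mul_le_mul_right _ stepA
      _ = A₁.card * n + A₂.card * n := by rw [← hsplit, Nat.add_mul]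
      _ ≤ (T 0).card * (Zg * n) + (k * B.card) * n := by
          apply Nat.add_le_add
          · rw [← Nat.mul_assoc]; exact Nat.mul_le_mul_right _ hA₁le
          · exact Nat.mul_le_mul_right _ hA₂le
      _ ≤ (T 0).card * (g.totalDegree * ∏ j : Fin s, (T j.succ).card)
            + (k * B.card) * (T 0).card := by
          apply Nat.add_le_add
          · exact Nat.mul_le_mul_left _ ihg
          · exact Nat.mul_le_mul_left _ hn0
      _ = (g.totalDegree + k) * ((T 0).card * ∏ j : Fin s, (T j.succ).card) := by
          rw [hBcard]; ring
      _ ≤ f.totalDegree * ((T 0).card * ∏ j : Fin s, (T j.succ).card) :=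
          Nat.mul_le_mul_right _ hdg
      _ = f.totalDegree * ∏ j : Fin (s + 1), (T j).card := by
          rw [Fin.prod_univ_succ]

/-- Casting an integer evaluation into `ZMod q` is evaluation of the reduced polynomial. -/
lemma eval_int_cast (s q : ℕ) (a : Fin s → ℤ) (P : MvPolynomial (Fin s) ℤ) :
    ((MvPolynomial.eval a P : ℤ) : ZMod q) =
      MvPolynomial.eval (fun j => ((a j : ZMod q)))
        (MvPolynomial.map (Int.castRingHom (ZMod q)) P) := by
  rw [MvPolynomial.eval_map, ← MvPolynomial.eval₂_id (g := a) P]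
  have := MvPolynomial.eval₂_comp_left (Int.castRingHom (ZMod q)) (RingHom.id ℤ) a P
  rw [RingHom.comp_id] at this
  exact this

lemma eval_zero_iff_dvd (s q : ℕ) (a : Fin s → ℤ) (P : MvPolynomial (Fin s) ℤ) :
    MvPolynomial.eval (fun j => ((a j : ZMod q)))
        (MvPolynomial.map (Int.castRingHom (ZMod q)) P) = 0 ↔
      (q : ℤ) ∣ MvPolynomial.eval a P := by
  rw [← eval_int_cast, ZMod.intCast_zmod_eq_zero_iff_dvd]

lemma card_good (s : ℕ) (Q : ℕ) [NeZero Q] (F : Finset ℕ)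
    (e : ZMod Q ≃+* Π p : {x // x ∈ F}, ZMod ((p : ℕ) ^ 2))
    (D : ∀ p : {x // x ∈ F}, (Fin s → ZMod ((p:ℕ)^2)) → Prop) :
    Nat.card {r : Fin s → ZMod Q // ∀ p, D p (fun j => e (r j) p)}
      = ∏ p : {x // x ∈ F}, Nat.card {v : Fin s → ZMod ((p:ℕ)^2) // D p v} := by
  have E : {r : Fin s → ZMod Q // ∀ p, D p (fun j => e (r j) p)} ≃
      Π p : {x // x ∈ F}, {v : Fin s → ZMod ((p:ℕ)^2) // D p v} :=
    (Equiv.subtypeEquiv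
      ((Equiv.piCongrRight fun _ => e.toEquiv).trans (Equiv.piComm _)) (fun r => Iff.rfl)).trans
      Equiv.subtypePiEquivPi
  rw [Nat.card_congr E, Nat.card_pi]


lemma card_ne_count (s m : ℕ) [NeZero m] (P : MvPolynomial (Fin s) ℤ) :
    Nat.card {v : Fin s → ZMod m //
        MvPolynomial.eval v (MvPolynomial.map (Int.castRingHom (ZMod m)) P) ≠ 0}
      = m ^ s - rhoP s P m := by
  classical
  rw [rhoP, Nat.card_eq_fintype_card, Nat.card_eq_fintype_card, Fintype.card_subtype_compl]
  congr 1
  simp [Fintype.card_fun, ZMod.card]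


set_option maxHeartbeats 1000000 in
lemma euler_lower (s : ℕ) (P : MvPolynomial (Fin s) ℤ) (δ : ℝ) (hδ : 0 < δ)
    (hdens : ∀ M : ℕ, ∃ Pb : Fin s → ℕ, (∀ j, 0 < Pb j) ∧ (∀ j, M ≤ Pb j) ∧
      δ * 2 ^ s * ∏ j, (Pb j : ℝ) ≤ (NP s P Pb : ℝ)) (N : ℕ) :
    δ * 2 ^ s / 3 ^ s ≤ eulerPartialProd s P N := by
  classical
  set F := (Finset.range (N + 1)).filter Nat.Prime with hF
  have hprime : ∀ p : {x // x ∈ F}, Nat.Prime (p : ℕ) := fun p => (Finset.mem_filter.mp p.2).2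
  set Q := ∏ p : {x // x ∈ F}, (p : ℕ) ^ 2 with hQdef
  have hQF : Q = ∏ p ∈ F, p ^ 2 := by
    rw [hQdef]; exact Finset.prod_coe_sort F (fun p => p ^ 2)
  have hQpos : 0 < Q := Finset.prod_pos fun p _ => pow_pos (hprime p).pos 2
  haveI : NeZero Q := ⟨hQpos.ne'⟩
  have coprime : Pairwise (Function.onFun Nat.Coprime fun p : {x // x ∈ F} => (p : ℕ) ^ 2) := by
    intro p q hne
    exact Nat.Coprime.pow _ _ ((Nat.coprime_primes (hprime p) (hprime q)).mpr
      (fun h => hne (Subtype.ext h)))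
  have e : ZMod Q ≃+* Π p : {x // x ∈ F}, ZMod ((p : ℕ) ^ 2) := ZMod.prodEquivPi _ coprime
  have hcompat : ∀ (p : {x // x ∈ F}) (x : ℤ), e ((x : ZMod Q)) p = ((x : ZMod ((p:ℕ)^2))) := by
    intro p x
    have h12 : ((Pi.evalRingHom (fun p : {x // x ∈ F} => ZMod ((p:ℕ)^2)) p).comp
        ((e : ZMod Q →+* _).comp (Int.castRingHom (ZMod Q))))
        = Int.castRingHom (ZMod ((p:ℕ)^2)) := RingHom.ext_int _ _
    exact RingHom.congr_fun h12 x
  -- the count of good residues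
  have hGcount : Nat.card {r : Fin s → ZMod Q // ∀ p : {x // x ∈ F},
        MvPolynomial.eval (fun j => e (r j) p)
          (MvPolynomial.map (Int.castRingHom (ZMod ((p:ℕ)^2))) P) ≠ 0}
      = ∏ p ∈ F, (p ^ (2 * s) - rhoP s P (p ^ 2)) := by
    have h0 : Nat.card {r : Fin s → ZMod Q // ∀ p : {x // x ∈ F},
        MvPolynomial.eval (fun j => e (r j) p)
          (MvPolynomial.map (Int.castRingHom (ZMod ((p:ℕ)^2))) P) ≠ 0}
        = ∏ p : {x // x ∈ F}, Nat.card {v : Fin s → ZMod ((p:ℕ)^2) //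
            MvPolynomial.eval v (MvPolynomial.map (Int.castRingHom (ZMod ((p:ℕ)^2))) P) ≠ 0} := by
      have h0' := @card_good s Q ⟨hQpos.ne'⟩ F e (fun p v =>
        MvPolynomial.eval v (MvPolynomial.map (Int.castRingHom (ZMod ((p:ℕ)^2))) P) ≠ 0)
      exact h0'
    rw [h0, ← Finset.prod_coe_sort F (fun p => p ^ (2 * s) - rhoP s P (p ^ 2))]
    apply Finset.prod_congr rfl
    intro p _
    haveI : NeZero ((p:ℕ)^2) := ⟨pow_ne_zero 2 (hprime p).ne_zero⟩
    rw [card_ne_count s ((p:ℕ)^2) P, ← pow_mul, mul_comm 2 s, mul_comm s 2]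
  -- choose the box
  obtain ⟨Pb, hpos, hQle, hNP⟩ := hdens Q
  have hQZ : (0:ℤ) < (Q:ℤ) := by exact_mod_cast hQpos
  -- the injection
  have hNPle : NP s P Pb ≤
      Nat.card ({r : Fin s → ZMod Q // ∀ p : {x // x ∈ F},
        MvPolynomial.eval (fun j => e (r j) p)
          (MvPolynomial.map (Int.castRingHom (ZMod ((p:ℕ)^2))) P) ≠ 0}
        × Π j, Fin (2 * Pb j / Q + 1)) := by
    rw [NP]
    apply Nat.card_le_card_of_injective (f := fun a =>
      (⟨fun j => ((a.1 j : ZMod Q)), by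
        intro p
        have hcomp : (fun j => e ((a.1 j : ZMod Q)) p)
            = fun j => ((a.1 j : ZMod ((p:ℕ)^2))) := funext fun j => hcompat p (a.1 j)
        rw [hcomp, Ne, eval_zero_iff_dvd]
        intro hdvd
        have hdvd' : ((p:ℕ):ℤ) * ((p:ℕ):ℤ) ∣ MvPolynomial.eval a.1 P := by
          have h2 : (((p:ℕ):ℤ))^2 ∣ MvPolynomial.eval a.1 P := by exact_mod_cast hdvd
          rwa [pow_two] at h2
        have hunit := a.2.2 _ hdvd'
        rcases Int.isUnit_iff.mp hunit with h1 | h1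
        · exact (hprime p).one_lt.ne' (by exact_mod_cast h1)
        · have h2 : (0:ℤ) ≤ ((p:ℕ):ℤ) := Int.natCast_nonneg _
          linarith [h1, h2]⟩,
      fun j => ⟨((a.1 j + Pb j) / (Q:ℤ)).toNat, by
        have hb := a.2.1 j
        rw [abs_le] at hb
        have hcst : ((2 * Pb j / Q : ℕ) : ℤ) = ((2 * Pb j : ℕ) : ℤ) / ((Q:ℕ):ℤ) := rfl
        have hdle : (a.1 j + Pb j) / (Q:ℤ) ≤ ((2 * Pb j / Q : ℕ) : ℤ) := by
          rw [hcst]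
          apply Int.ediv_le_ediv hQZ
          push_cast
          linarith [hb.2]
        exact Nat.lt_succ_of_le (Int.toNat_le.mpr hdle)⟩))
    -- injectivity
    intro a b hab
    have hfst := congrArg (fun t => t.1.1) hab
    have hsnd := congrArg Prod.snd hab
    apply Subtype.ext
    funext j
    have hr : ((a.1 j : ZMod Q)) = (b.1 j : ZMod Q) := congrFun hfst j
    have hkj : (((a.1 j + Pb j) / (Q:ℤ)).toNat) = ((b.1 j + Pb j) / (Q:ℤ)).toNat :=
      congrArg Fin.val (congrFun hsnd j)
    have hba := (a.2.1 j); have hbb := (b.2.1 j)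
    rw [abs_le] at hba hbb
    have h0a : (0:ℤ) ≤ a.1 j + Pb j := by linarith [hba.1]
    have h0b : (0:ℤ) ≤ b.1 j + Pb j := by linarith [hbb.1]
    have hda : (0:ℤ) ≤ (a.1 j + Pb j) / (Q:ℤ) := Int.ediv_nonneg h0a hQZ.le
    have hdb : (0:ℤ) ≤ (b.1 j + Pb j) / (Q:ℤ) := Int.ediv_nonneg h0b hQZ.le
    have hdiv : (a.1 j + Pb j) / (Q:ℤ) = (b.1 j + Pb j) / (Q:ℤ) := by
      have h := congrArg (Nat.cast : ℕ → ℤ) hkj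
      rwa [Int.toNat_of_nonneg hda, Int.toNat_of_nonneg hdb] at h
    have hmod : a.1 j % (Q:ℤ) = b.1 j % (Q:ℤ) := (ZMod.intCast_eq_intCast_iff' _ _ _).mp hr
    have hmod' : (a.1 j + Pb j) % (Q:ℤ) = (b.1 j + Pb j) % (Q:ℤ) := by
      rw [Int.add_emod, hmod, ← Int.add_emod]
    have ea := Int.mul_ediv_add_emod (a.1 j + Pb j) (Q:ℤ)
    have eb := Int.mul_ediv_add_emod (b.1 j + Pb j) (Q:ℤ)
    have hfin : a.1 j + (Pb j : ℤ) = b.1 j + Pb j := by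
      rw [← ea, ← eb, hdiv, hmod']
    linarith
  -- turn into numbers
  set G := ∏ p ∈ F, (p ^ (2 * s) - rhoP s P (p ^ 2)) with hG
  have hcard2 : NP s P Pb ≤ G * ∏ j, (2 * Pb j / Q + 1) := by
    refine hNPle.trans (le_of_eq ?_)
    rw [Nat.card_prod, hGcount, Nat.card_pi]
    congr 1
    apply Finset.prod_congr rfl
    intro j _
    simp [Nat.card_eq_fintype_card]
  -- rho bounds
  have hrhole : ∀ p ∈ F, rhoP s P (p ^ 2) ≤ p ^ (2 * s) := by
    intro p hp
    haveI : NeZero (p ^ 2) := ⟨pow_ne_zero 2 (Finset.mem_filter.mp hp).2.ne_zero⟩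
    rw [rhoP]
    have h1 : Nat.card {a : Fin s → ZMod (p^2) //
        MvPolynomial.eval a (MvPolynomial.map (Int.castRingHom (ZMod (p^2))) P) = 0}
        ≤ Nat.card (Fin s → ZMod (p^2)) :=
      Nat.card_le_card_of_injective Subtype.val Subtype.val_injective
    have h2 : Nat.card (Fin s → ZMod (p^2)) = p ^ (2*s) := by
      simp [Nat.card_eq_fintype_card, Fintype.card_fun, ZMod.card, pow_mul]
    rw [← h2]
    exact h1
  have hGcast : (G:ℝ) = ∏ p ∈ F, ((p:ℝ) ^ (2*s) - (rhoP s P (p^2) : ℝ)) := by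
    rw [hG, Nat.cast_prod]
    apply Finset.prod_congr rfl
    intro p hp
    rw [Nat.cast_sub (hrhole p hp)]
    push_cast
    ring
  have hppow_pos : ∀ p ∈ F, (0:ℝ) < (p:ℝ) ^ (2*s) := by
    intro p hp
    have : 0 < p := (Finset.mem_filter.mp hp).2.pos
    positivity
  have heuler : eulerPartialProd s P N = (G:ℝ) / (Q:ℝ) ^ s := by
    have hQpow : ((Q:ℝ)) ^ s = ∏ p ∈ F, (p:ℝ) ^ (2*s) := by
      rw [hQF]
      push_cast
      rw [← Finset.prod_pow]
      apply Finset.prod_congr rfl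
      intro p _
      rw [← pow_mul]
    rw [eulerPartialProd, ← hF, hGcast, hQpow, ← Finset.prod_div_distrib]
    apply Finset.prod_congr rfl
    intro p hp
    have := hppow_pos p hp
    field_simp
  -- real estimates
  have hPprod : (0:ℝ) < ∏ j, (Pb j : ℝ) :=
    Finset.prod_pos fun j _ => by exact_mod_cast hpos j
  have hQR : (0:ℝ) < (Q:ℝ) := by exact_mod_cast hQpos
  have hKle : ∀ j, ((2 * Pb j / Q + 1 : ℕ) : ℝ) ≤ 3 * (Pb j : ℝ) / Q := by
    intro j
    have h1 : ((2 * Pb j / Q : ℕ) : ℝ) ≤ (2 * (Pb j:ℝ)) / Q := by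
      calc ((2 * Pb j / Q : ℕ) : ℝ) ≤ ((2 * Pb j : ℕ) : ℝ) / ((Q:ℕ):ℝ) := Nat.cast_div_le
        _ = (2 * (Pb j:ℝ)) / Q := by push_cast; ring
    have h2 : (1:ℝ) ≤ (Pb j:ℝ) / Q := by
      rw [le_div_iff₀ hQR]
      have : (Q:ℝ) ≤ (Pb j : ℝ) := by exact_mod_cast hQle j
      linarith
    have h3 : ((2 * Pb j / Q + 1 : ℕ) : ℝ) = ((2 * Pb j / Q : ℕ) : ℝ) + 1 := by push_cast; ring
    rw [h3]
    have h4 : 3 * (Pb j:ℝ) / Q = 2 * (Pb j:ℝ)/Q + (Pb j:ℝ)/Q := by ring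
    rw [h4]
    linarith
  have hKprod : (∏ j, ((2 * Pb j / Q + 1 : ℕ) : ℝ)) ≤ 3 ^ s * (∏ j, (Pb j : ℝ)) / (Q:ℝ) ^ s := by
    have h1 : ∏ j, ((2 * Pb j / Q + 1 : ℕ) : ℝ) ≤ ∏ j, (3 * (Pb j:ℝ) / Q) :=
      Finset.prod_le_prod (fun j _ => by positivity) (fun j _ => hKle j)
    calc ∏ j, ((2 * Pb j / Q + 1 : ℕ) : ℝ) ≤ ∏ j, (3 * (Pb j:ℝ) / Q) := h1
      _ = 3 ^ s * (∏ j, (Pb j : ℝ)) / (Q:ℝ) ^ s := by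
          rw [Finset.prod_div_distrib, Finset.prod_mul_distrib, Finset.prod_const,
            Finset.prod_const]
          simp
  have hmain : δ * 2 ^ s * ∏ j, (Pb j : ℝ) ≤ (G:ℝ) * ∏ j, ((2 * Pb j / Q + 1 : ℕ) : ℝ) := by
    refine hNP.trans ?_
    calc (NP s P Pb : ℝ) ≤ ((G * ∏ j, (2 * Pb j / Q + 1) : ℕ) : ℝ) := Nat.cast_le.mpr hcard2
      _ = (G:ℝ) * ∏ j, ((2 * Pb j / Q + 1 : ℕ) : ℝ) := by push_cast; ring
  have hGnn : (0:ℝ) ≤ (G:ℝ) := Nat.cast_nonneg _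
  have h3s : (0:ℝ) < 3 ^ s := by positivity
  rw [div_le_iff₀ h3s]
  apply le_of_mul_le_mul_right _ hPprod
  calc δ * 2 ^ s * ∏ j, (Pb j : ℝ)
      ≤ (G:ℝ) * ∏ j, ((2 * Pb j / Q + 1 : ℕ) : ℝ) := hmain
    _ ≤ (G:ℝ) * (3 ^ s * (∏ j, (Pb j : ℝ)) / (Q:ℝ) ^ s) :=
        mul_le_mul_of_nonneg_left hKprod hGnn
    _ = ((G:ℝ) / (Q:ℝ) ^ s) * 3 ^ s * ∏ j, (Pb j : ℝ) := by ring
    _ = eulerPartialProd s P N * 3 ^ s * ∏ j, (Pb j : ℝ) := by rw [heuler]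

/-! ### The main theorem -/

/-- If `P ∈ ℤ[X₁,…,X_s]` has total degree `≥ 2` and the upper density of
squarefree values of `P` is positive (there is a real `δ > 0` such that for every `M`
there is a tuple `𝐏` of positive integers with `min(P₁,…,P_s) ≥ M` and
`N_P(𝐏) ≥ δ · 2ˢ · P₁⋯P_s`), then: (1) the Euler product `𝔖_P` (the limit `S` of the
partial products) is strictly positive; (2) `P` is squarefree as a polynomial; and
(3) `P` does not enjoy property (a). -/
theorem squarefree_of_positive_upper_density (s : ℕ) (hs : 1 ≤ s)
    (P : MvPolynomial (Fin s) ℤ) (hd : 2 ≤ P.totalDegree)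
    (δ : ℝ) (hδ : 0 < δ)
    (hdens : ∀ M : ℕ, ∃ Pb : Fin s → ℕ, (∀ j, 0 < Pb j) ∧ (∀ j, M ≤ Pb j) ∧
      δ * 2 ^ s * ∏ j, (Pb j : ℝ) ≤ (NP s P Pb : ℝ))
    (S : ℝ) (hS : Filter.Tendsto (eulerPartialProd s P) Filter.atTop (nhds S)) :
    0 < S ∧
      (¬ ∃ L : MvPolynomial (Fin s) ℤ, 1 ≤ L.totalDegree ∧ L ^ 2 ∣ P) ∧
      (∀ p : ℕ, p.Prime → ∃ a : Fin s → ℤ, ¬ ((p : ℤ)) ^ 2 ∣ MvPolynomial.eval a P) := by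
  refine ⟨?_, ?_, ?_⟩
  · -- part (1): positivity of the Euler product
    have hper := euler_lower s P δ hδ hdens
    have hge : δ * 2 ^ s / 3 ^ s ≤ S := ge_of_tendsto' hS hper
    have hpos : (0:ℝ) < δ * 2 ^ s / 3 ^ s := by positivity
    linarith
  · -- part (2): P is squarefree as a polynomial
    rintro ⟨L, hL1, hLP⟩
    -- the polynomial L² − 1 is nonzero
    have hg0 : L ^ 2 - 1 ≠ 0 := by
      intro h
      have h1 : (L - 1) * (L + 1) = 0 := by ring_nf; linear_combination h
      rcases mul_eq_zero.mp h1 with h2 | h2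
      · have : L = 1 := by linear_combination h2
        rw [this] at hL1
        simp [MvPolynomial.totalDegree_one] at hL1
      · have : L = -1 := by linear_combination h2
        rw [this] at hL1
        have : (-1 : MvPolynomial (Fin s) ℤ).totalDegree = 0 := by
          rw [show (-1 : MvPolynomial (Fin s) ℤ) = C (-1) by simp]
          exact MvPolynomial.totalDegree_C _
        omega
    set dG := (L ^ 2 - 1).totalDegree with hdG
    -- choose M large
    obtain ⟨M, hM⟩ := exists_nat_gt (((dG : ℝ) * 3 ^ s) / (δ * 2 ^ s))
    have h2s : (0:ℝ) < δ * 2 ^ s := by positivity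
    have hMc : (dG : ℝ) * 3 ^ s < δ * 2 ^ s * (2 * M + 1) := by
      rw [div_lt_iff₀ h2s] at hM
      nlinarith [h2s]
    obtain ⟨Pb, hpos, hMle, hNP⟩ := hdens M
    set T : Fin s → Finset ℤ := fun j => Finset.Icc (-(Pb j : ℤ)) (Pb j) with hT
    have hTcard : ∀ j, (T j).card = 2 * Pb j + 1 := by
      intro j
      rw [hT]
      rw [Int.card_Icc]
      omega
    have hTn : ∀ j, 2 * M + 1 ≤ (T j).card := by
      intro j; rw [hTcard j]; have := hMle j; omega
    set Z := (Fintype.piFinset T).filter (fun a => MvPolynomial.eval a (L ^ 2 - 1) = 0) with hZ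
    -- NP ≤ Z.card
    have hNPle : NP s P Pb ≤ Z.card := by
      rw [NP, ← Nat.card_eq_finsetCard Z]
      apply Nat.card_le_card_of_injective
        (f := fun a => (⟨a.1, by
          rw [hZ, Finset.mem_filter, Fintype.mem_piFinset]
          constructor
          · intro j
            rw [hT, Finset.mem_Icc]
            have := a.2.1 j
            rw [abs_le] at this
            exact this
          · -- eval a (L²−1) = 0
            obtain ⟨c, hc⟩ := hLP
            have hdvd : (MvPolynomial.eval a.1 L) * (MvPolynomial.eval a.1 L) ∣
                MvPolynomial.eval a.1 P := by
              refine ⟨MvPolynomial.eval a.1 c, ?_⟩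
              have h := congrArg (MvPolynomial.eval a.1) hc
              simp only [map_mul, map_pow] at h
              rw [h]; ring
            have hunit := a.2.2 _ hdvd
            rcases Int.isUnit_iff.mp hunit with h1 | h1 <;>
              simp [map_sub, map_pow, h1]⟩ : {x // x ∈ Z}))
      intro a b hab
      simp only [Subtype.mk.injEq] at hab
      exact Subtype.ext hab
    -- real arithmetic
    have hPprod : (0:ℝ) < ∏ j, (Pb j : ℝ) :=
      Finset.prod_pos fun j _ => by exact_mod_cast hpos j
    have hZr : ((Z.card : ℝ)) * (2 * (M:ℝ) + 1) ≤ (dG : ℝ) * ∏ j, (2 * (Pb j : ℝ) + 1) := by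
      have hsz' : Z.card * (2 * M + 1) ≤ dG * ∏ j, (T j).card := by
        rw [hZ]; exact sz_aux s (L ^ 2 - 1) hg0 T (2 * M + 1) hTn
      calc ((Z.card : ℝ)) * (2 * (M:ℝ) + 1)
          = ((Z.card * (2 * M + 1) : ℕ) : ℝ) := by push_cast; ring
        _ ≤ ((dG * ∏ j, (T j).card : ℕ) : ℝ) := Nat.cast_le.mpr hsz'
        _ = (dG:ℝ) * ∏ j, ((T j).card : ℝ) := by push_cast; ring
        _ = (dG:ℝ) * ∏ j, (2 * (Pb j : ℝ) + 1) := by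
            congr 1
            apply Finset.prod_congr rfl
            intro j _
            rw [hTcard j]; push_cast; ring
    have hprod3 : ∏ j, (2 * (Pb j : ℝ) + 1) ≤ 3 ^ s * ∏ j, (Pb j : ℝ) := by
      have : ∏ j, (2 * (Pb j : ℝ) + 1) ≤ ∏ j, (3 * (Pb j : ℝ)) := by
        apply Finset.prod_le_prod
        · intro j _; positivity
        · intro j _
          have : (1:ℝ) ≤ (Pb j : ℝ) := by exact_mod_cast hpos j
          linarith
      calc ∏ j, (2 * (Pb j : ℝ) + 1) ≤ ∏ j, (3 * (Pb j : ℝ)) := this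
        _ = 3 ^ s * ∏ j, (Pb j : ℝ) := by
            rw [Finset.prod_mul_distrib, Finset.prod_const]
            simp
    have hNPZ : (NP s P Pb : ℝ) ≤ (Z.card : ℝ) := by exact_mod_cast hNPle
    have hfinal : δ * 2 ^ s * (2 * M + 1) * ∏ j, (Pb j : ℝ) ≤
        (dG : ℝ) * 3 ^ s * ∏ j, (Pb j : ℝ) := by
      have c1 : δ * 2 ^ s * (∏ j, (Pb j : ℝ)) * (2 * M + 1) ≤ (Z.card : ℝ) * (2 * M + 1) := by
        apply mul_le_mul_of_nonneg_right (le_trans hNP hNPZ)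
        positivity
      have c2 : (dG : ℝ) * ∏ j, (2 * (Pb j : ℝ) + 1) ≤ (dG : ℝ) * (3 ^ s * ∏ j, (Pb j : ℝ)) :=
        mul_le_mul_of_nonneg_left hprod3 (by positivity)
      nlinarith [c1, c2, hZr]
    have := le_of_mul_le_mul_right (by linarith [hfinal] : δ * 2 ^ s * (2 * M + 1) * ∏ j, (Pb j : ℝ) ≤ (dG : ℝ) * 3 ^ s * ∏ j, (Pb j : ℝ)) hPprod
    linarith [hMc, this]
  · -- part (3): no fixed prime square divisor
    intro p hp
    by_contra hcon
    push_neg at hcon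
    obtain ⟨Pb, hpos, -, hNP⟩ := hdens 1
    have hPprod : (0:ℝ) < ∏ j, (Pb j : ℝ) :=
      Finset.prod_pos fun j _ => by exact_mod_cast hpos j
    have hNPpos : 0 < NP s P Pb := by
      have : (0:ℝ) < (NP s P Pb : ℝ) := lt_of_lt_of_le (by positivity) hNP
      exact_mod_cast this
    have hne : Nonempty {a : Fin s → ℤ //
        (∀ j, |a j| ≤ (Pb j : ℤ)) ∧ Squarefree (MvPolynomial.eval a P)} := by
      rw [NP] at hNPpos
      exact (Nat.card_pos_iff.mp hNPpos).1
    obtain ⟨a, -, hsq⟩ := hne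
    have hdvd : ((p:ℤ)) * ((p:ℤ)) ∣ MvPolynomial.eval a P := by
      have := hcon a
      rwa [pow_two] at this
    have hunit := hsq _ hdvd
    rcases Int.isUnit_iff.mp hunit with h1 | h1
    · have : p = 1 := by exact_mod_cast h1
      exact hp.one_lt.ne' this
    · have : (0:ℤ) ≤ (p:ℤ) := Int.natCast_nonneg p
      omega
end
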